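/- (Jaffard's theorem, sub-exponential/exponential case.) Let β ∈ (0,1] and γ > 0. Let T be a bounded linear operator on ℓ²(ℕ, ℂ) which is bijective, and suppose its matrix A_{m,n} := ⟨T δ_n, δ_m⟩ (where δ_k denotes the k-th canonical vector) satisfies |A_{m,n}| ≤ C·e^{−γ|m−n|^β} for some C > 0 and all positive integers m, n. Then there exist γ₁ ∈ (0, γ) and C₁ > 0 such that the matrix of the inverse operator satisfies |⟨T^{−1} δ_n, δ_m⟩| ≤ C₁·e^{−γ₁|m−n|^β} for all m, n. -/

import Mathlib

noncomputable section
open scoped ENNReal NNReal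
abbrev H := lp (fun _ : ℕ => ℂ) 2

/-- coordinate evaluation as CLM -/
def evalCLM (m : ℕ) : H →L[ℂ] ℂ :=
  LinearMap.mkContinuous
    { toFun := fun z => z m
      map_add' := fun x y => rfl
      map_smul' := fun c x => rfl } 1
    (fun z => by rw [one_mul]; exact (lp.norm_apply_le_norm (by norm_num) z m))

@[simp] lemma evalCLM_apply (m : ℕ) (z : H) : evalCLM m z = z m := rfl

lemma single_eq_smul (k : ℕ) (c : ℂ) :
    (lp.single 2 k c : H) = c • lp.single 2 k (1:ℂ) := by
  rw [← lp.single_smul]; norm_num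

lemma coord_hasSum (B : H →L[ℂ] H) (z : H) (m : ℕ) :
    HasSum (fun k => z k * (B (lp.single 2 k (1:ℂ)) : H) m) ((B z : H) m) := by
  have h1 : HasSum (fun k => lp.single 2 k (z k)) z := lp.hasSum_single (by norm_num) z
  have h3 : HasSum (fun k => evalCLM m (B (lp.single 2 k (z k)))) (evalCLM m (B z)) :=
    (evalCLM m).hasSum (B.hasSum h1)
  have key : (fun k => evalCLM m (B (lp.single 2 k (z k))))
      = fun k => z k * (B (lp.single 2 k (1:ℂ)) : H) m := funext fun k => by
    rw [single_eq_smul, map_smul, map_smul, smul_eq_mul]; rfl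
  rw [key] at h3
  exact h3

lemma two_toReal : ((2:ℝ≥0∞)).toReal = 2 := by norm_num

lemma memH (f : ℕ → ℂ) (hf : Summable fun i => ‖f i‖ ^ (2:ℕ)) : Memℓp f (2:ℝ≥0∞) := by
  apply memℓp_gen
  rw [two_toReal]
  convert hf using 2 with i
  rw [← Real.rpow_natCast]; norm_num

/-- diagonal multiplication operator -/
def diagCLM (w : ℕ → ℂ) (B : ℝ) (hB : 0 ≤ B) (hw : ∀ i, ‖w i‖ ≤ B) : H →L[ℂ] H := by
  have hmem : ∀ z : H, Memℓp (fun i => w i * z i) (2:ℝ≥0∞) := by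
    intro z
    apply memH
    apply Summable.of_nonneg_of_le (fun i => by positivity)
      (fun i => ?_) (((lp.memℓp z).summable (by rw [two_toReal]; norm_num)).mul_left (B^2))
    · calc ‖w i * z i‖ ^ (2:ℕ) ≤ (B * ‖z i‖) ^ (2:ℕ) := by
            apply pow_le_pow_left₀ (norm_nonneg _)
            rw [norm_mul]
            exact mul_le_mul_of_nonneg_right (hw i) (norm_nonneg _)
        _ = B ^ 2 * ‖z i‖ ^ (2:ℕ) := by ring
        _ ≤ B ^ 2 * ‖(z : ℕ → ℂ) i‖ ^ ((2:ℝ≥0∞)).toReal := by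
            rw [two_toReal, ← Real.rpow_natCast]; norm_num
  exact LinearMap.mkContinuous
    { toFun := fun z => (⟨fun i => w i * z i, hmem z⟩ : H)
      map_add' := fun x y => by
        apply lp.ext; funext i
        simp only [lp.coeFn_add, Pi.add_apply]
        show w i * ((x + y) : H) i = _
        rw [lp.coeFn_add]; simp; ring
      map_smul' := fun c x => by
        apply lp.ext; funext i
        show w i * ((c • x) : H) i = _
        rw [lp.coeFn_smul]
        simp only [Pi.smul_apply, smul_eq_mul, RingHom.id_apply]
        show _ = c * (w i * x i)
        ring } B
    (fun z => by
      apply lp.norm_le_of_forall_sum_le (by rw [two_toReal]; norm_num)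
        (by positivity)
      intro s
      rw [two_toReal]
      calc ∑ i ∈ s, ‖w i * z i‖ ^ (2:ℝ)
          ≤ ∑ i ∈ s, B^(2:ℝ) * ‖(z:ℕ→ℂ) i‖ ^ (2:ℝ) := by
            apply Finset.sum_le_sum
            intro i _
            rw [← Real.mul_rpow hB (norm_nonneg _)]
            apply Real.rpow_le_rpow (norm_nonneg _) ?_ (by norm_num)
            rw [norm_mul]
            exact mul_le_mul_of_nonneg_right (hw i) (norm_nonneg _)
        _ = B^(2:ℝ) * ∑ i ∈ s, ‖(z:ℕ→ℂ) i‖ ^ (2:ℝ) := by rw [Finset.mul_sum]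
        _ ≤ B^(2:ℝ) * ‖z‖ ^ (2:ℝ) := by
            apply mul_le_mul_of_nonneg_left ?_ (by positivity)
            have := lp.sum_rpow_le_norm_rpow (p := 2) (by rw [two_toReal]; norm_num) z s
            rw [two_toReal] at this
            exact this
        _ = (B * ‖z‖) ^ (2:ℝ) := by rw [Real.mul_rpow hB (norm_nonneg _)])

@[simp] lemma diagCLM_apply (w : ℕ → ℂ) (B : ℝ) (hB : 0 ≤ B) (hw : ∀ i, ‖w i‖ ≤ B)
    (z : H) (i : ℕ) : (diagCLM w B hB hw z : ℕ → ℂ) i = w i * z i := rfl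

lemma znorm_sq_summable (z : H) : Summable (fun k => ‖(z : ℕ → ℂ) k‖ ^ (2:ℕ)) := by
  have := (lp.memℓp z).summable (p := 2) (by rw [two_toReal]; norm_num)
  rw [two_toReal] at this
  convert this using 2 with i
  rw [← Real.rpow_natCast]; norm_num

lemma znorm_sq_tsum_le (z : H) : ∑' k, ‖(z : ℕ → ℂ) k‖ ^ (2:ℕ) ≤ ‖z‖ ^ (2:ℕ) := by
  have h := lp.norm_rpow_eq_tsum (p := 2) (by rw [two_toReal]; norm_num) z
  rw [two_toReal] at h
  simp_rw [show ((2:ℝ)) = ((2:ℕ):ℝ) from by norm_num, Real.rpow_natCast] at h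
  exact le_of_eq h.symm

lemma schur (Bop : H →L[ℂ] H) (b : ℕ → ℕ → ℝ) (S : ℝ) (hS : 0 ≤ S)
    (hb : ∀ m k, 0 ≤ b m k)
    (hent : ∀ m k, ‖(Bop (lp.single 2 k (1:ℂ)) : ℕ → ℂ) m‖ ≤ b m k)
    (hrow : ∀ m, ∀ s : Finset ℕ, ∑ k ∈ s, b m k ≤ S)
    (hcol : ∀ k, ∀ s : Finset ℕ, ∑ m ∈ s, b m k ≤ S)
    (z : H) : ‖Bop z‖ ≤ S * ‖z‖ := by
  have hbS : ∀ m k, b m k ≤ S := fun m k => by simpa using hrow m {k}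
  have hrows : ∀ m, Summable (fun k => b m k) := fun m =>
    summable_of_sum_le (fun k => hb m k) (hrow m)
  have hz2 := znorm_sq_summable z
  set Q : ℕ → ℝ := fun m => ∑' k, b m k * ‖(z : ℕ → ℂ) k‖ ^ (2:ℕ) with hQ
  have hQsummand : ∀ m, Summable (fun k => b m k * ‖(z : ℕ → ℂ) k‖ ^ (2:ℕ)) := fun m => by
    apply Summable.of_nonneg_of_le
      (fun k => mul_nonneg (hb m k) (by positivity)) (fun k => ?_) (hz2.mul_left S)
    exact mul_le_mul_of_nonneg_right (hbS m k) (by positivity)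
  have hQnonneg : ∀ m, 0 ≤ Q m := fun m =>
    tsum_nonneg (fun k => mul_nonneg (hb m k) (by positivity))
  have hcoord : ∀ m, ‖(Bop z : ℕ → ℂ) m‖ ^ (2:ℕ) ≤ S * Q m := by
    intro m
    have hsum := coord_hasSum Bop z m
    have hgsummable : Summable (fun k => b m k * ‖(z : ℕ → ℂ) k‖) := by
      apply Summable.of_nonneg_of_le (fun k => mul_nonneg (hb m k) (norm_nonneg _))
        (fun k => ?_) ((hrows m).mul_left ‖z‖)
      calc b m k * ‖(z : ℕ → ℂ) k‖ ≤ b m k * ‖z‖ :=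
            mul_le_mul_of_nonneg_left (lp.norm_apply_le_norm (by norm_num) z k) (hb m k)
        _ = ‖z‖ * b m k := mul_comm _ _
    have h1 : ‖(Bop z : ℕ → ℂ) m‖ ≤ ∑' k, b m k * ‖(z : ℕ → ℂ) k‖ := by
      rw [← hsum.tsum_eq]
      apply tsum_of_norm_bounded hgsummable.hasSum
      intro k
      rw [norm_mul, mul_comm]
      exact mul_le_mul_of_nonneg_right (hent m k) (norm_nonneg _)
    have hfin : ∀ t : Finset ℕ, (∑ k ∈ t, b m k * ‖(z : ℕ → ℂ) k‖) ^ 2 ≤ S * Q m := by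
      intro t
      have e1 : ∑ k ∈ t, Real.sqrt (b m k) ^ 2 = ∑ k ∈ t, b m k :=
        Finset.sum_congr rfl fun k _ => Real.sq_sqrt (hb m k)
      have e2 : ∑ k ∈ t, (Real.sqrt (b m k) * ‖(z : ℕ → ℂ) k‖) ^ 2
          = ∑ k ∈ t, b m k * ‖(z : ℕ → ℂ) k‖ ^ (2:ℕ) :=
        Finset.sum_congr rfl fun k _ => by rw [mul_pow, Real.sq_sqrt (hb m k)]
      have e3 : ∑ k ∈ t, b m k * ‖(z : ℕ → ℂ) k‖
          = ∑ k ∈ t, Real.sqrt (b m k) * (Real.sqrt (b m k) * ‖(z : ℕ → ℂ) k‖) :=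
        Finset.sum_congr rfl fun k _ => by rw [← mul_assoc, Real.mul_self_sqrt (hb m k)]
      have hcs := Finset.sum_mul_sq_le_sq_mul_sq t (fun k => Real.sqrt (b m k))
        (fun k => Real.sqrt (b m k) * ‖(z : ℕ → ℂ) k‖)
      rw [e1, e2] at hcs
      rw [e3]
      refine hcs.trans (mul_le_mul (hrow m t) ?_ ?_ hS)
      · exact Summable.sum_le_tsum t
          (fun k _ => mul_nonneg (hb m k) (by positivity)) (hQsummand m)
      · exact Finset.sum_nonneg fun k _ => mul_nonneg (hb m k) (by positivity)
    have hle : ∑' k, b m k * ‖(z : ℕ → ℂ) k‖ ≤ Real.sqrt (S * Q m) := by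
      apply Summable.tsum_le_of_sum_le hgsummable
      intro t
      rw [Real.le_sqrt (Finset.sum_nonneg fun k _ => mul_nonneg (hb m k) (norm_nonneg _))
        (mul_nonneg hS (hQnonneg m))]
      exact hfin t
    have hCS : (∑' k, b m k * ‖(z : ℕ → ℂ) k‖) ^ (2:ℕ) ≤ S * Q m := by
      have := pow_le_pow_left₀
        (tsum_nonneg fun k => mul_nonneg (hb m k) (norm_nonneg _)) hle 2
      rwa [Real.sq_sqrt (mul_nonneg hS (hQnonneg m))] at this
    exact (pow_le_pow_left₀ (norm_nonneg _) h1 2).trans hCS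
  apply lp.norm_le_of_forall_sum_le (by rw [two_toReal]; norm_num) (by positivity)
  intro s
  rw [two_toReal]
  have hswap : ∑ m ∈ s, Q m = ∑' k, ∑ m ∈ s, b m k * ‖(z : ℕ → ℂ) k‖ ^ (2:ℕ) :=
    (Summable.tsum_finsetSum (fun m _ => hQsummand m)).symm
  have hQsum : ∑ m ∈ s, Q m ≤ S * ‖z‖ ^ (2:ℕ) := by
    rw [hswap]
    calc ∑' k, ∑ m ∈ s, b m k * ‖(z : ℕ → ℂ) k‖ ^ (2:ℕ)
        ≤ ∑' k, S * ‖(z : ℕ → ℂ) k‖ ^ (2:ℕ) := by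
          apply Summable.tsum_le_tsum ?_ (summable_sum fun m _ => hQsummand m) (hz2.mul_left S)
          intro k
          rw [← Finset.sum_mul]
          exact mul_le_mul_of_nonneg_right (hcol k s) (by positivity)
      _ = S * ∑' k, ‖(z : ℕ → ℂ) k‖ ^ (2:ℕ) := tsum_mul_left
      _ ≤ S * ‖z‖ ^ (2:ℕ) := mul_le_mul_of_nonneg_left (znorm_sq_tsum_le z) hS
  have key : ∑ m ∈ s, ‖(Bop z : ℕ → ℂ) m‖ ^ (2:ℕ) ≤ (S * ‖z‖) ^ (2:ℕ) := by
    calc ∑ m ∈ s, ‖(Bop z : ℕ → ℂ) m‖ ^ (2:ℕ) ≤ ∑ m ∈ s, S * Q m :=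
          Finset.sum_le_sum fun m _ => hcoord m
      _ = S * ∑ m ∈ s, Q m := by rw [Finset.mul_sum]
      _ ≤ S * (S * ‖z‖ ^ (2:ℕ)) := mul_le_mul_of_nonneg_left hQsum hS
      _ = (S * ‖z‖) ^ (2:ℕ) := by ring
  calc ∑ m ∈ s, ‖(Bop z : ℕ → ℂ) m‖ ^ (2:ℝ)
      = ∑ m ∈ s, ‖(Bop z : ℕ → ℂ) m‖ ^ (2:ℕ) := by
        apply Finset.sum_congr rfl; intro m _
        rw [← Real.rpow_natCast]; norm_num
    _ ≤ (S * ‖z‖) ^ (2:ℕ) := key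
    _ = (S * ‖z‖) ^ (2:ℝ) := by rw [← Real.rpow_natCast]; norm_num

lemma real_rpow_add_le {a b p : ℝ} (ha : 0 ≤ a) (hb : 0 ≤ b) (hp0 : 0 ≤ p) (hp1 : p ≤ 1) :
    (a + b) ^ p ≤ a ^ p + b ^ p := by
  have := NNReal.rpow_add_le_add_rpow (a.toNNReal) (b.toNNReal) hp0 hp1
  calc (a + b) ^ p = ((a.toNNReal + b.toNNReal : ℝ≥0) : ℝ) ^ p := by
        rw [← Real.toNNReal_add ha hb, Real.coe_toNNReal _ (by positivity)]
    _ = (((a.toNNReal + b.toNNReal) ^ p : ℝ≥0) : ℝ) := by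
        rw [NNReal.coe_rpow]
    _ ≤ ((a.toNNReal ^ p + b.toNNReal ^ p : ℝ≥0) : ℝ) := by exact_mod_cast this
    _ = a ^ p + b ^ p := by
        push_cast [NNReal.coe_rpow, Real.coe_toNNReal _ ha, Real.coe_toNNReal _ hb]
        ring

lemma abs_rpow_sub {β : ℝ} (hβ₀ : 0 < β) (hβ₁ : β ≤ 1) {a b : ℝ} (ha : 0 ≤ a) (hb : 0 ≤ b) :
    |a ^ β - b ^ β| ≤ |a - b| ^ β := by
  wlog hab : b ≤ a generalizing a b
  · rw [abs_sub_comm, abs_sub_comm a b]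
    exact this hb ha (le_of_not_ge hab)
  have h1 : a ^ β ≤ b ^ β + (a - b) ^ β := by
    calc a ^ β = (b + (a - b)) ^ β := by ring_nf
      _ ≤ b ^ β + (a - b) ^ β := real_rpow_add_le hb (by linarith) hβ₀.le hβ₁
  have h2 : b ^ β ≤ a ^ β := Real.rpow_le_rpow hb hab hβ₀.le
  rw [abs_of_nonneg (by linarith), abs_of_nonneg (by linarith)]
  linarith

lemma abs_min_sub_min (a b c : ℝ) : |min a c - min b c| ≤ |a - b| := by
  have key : ∀ x y : ℝ, min x c - min y c ≤ |x - y| := by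
    intro x y
    have h1 : min x c ≤ min (y + |x - y|) (c + |x - y|) := by
      apply min_le_min ?_ (by simp [abs_nonneg])
      have := le_abs_self (x - y); linarith
    rw [min_add_add_right] at h1
    linarith
  rw [abs_sub_le_iff]
  exact ⟨key a b, by rw [abs_sub_comm]; exact key b a⟩

lemma exp_sub_one_le {s : ℝ} (hs : 0 ≤ s) : Real.exp s - 1 ≤ s * Real.exp s := by
  have h := Real.add_one_le_exp (-s)
  have h2 : Real.exp (-s) = (Real.exp s)⁻¹ := Real.exp_neg s
  have h3 := Real.exp_pos s
  rw [h2] at h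
  have h4 : (1 - s) * Real.exp s ≤ 1 := by
    have := mul_le_mul_of_nonneg_right h h3.le
    rwa [inv_mul_cancel₀ h3.ne', show (-s + 1) = 1 - s by ring] at this
  nlinarith

lemma abs_exp_sub_one_le {u s : ℝ} (h : |u| ≤ s) : |Real.exp u - 1| ≤ Real.exp s - 1 := by
  have hs : 0 ≤ s := le_trans (abs_nonneg u) h
  have h1 : u ≤ s := le_trans (le_abs_self u) h
  have h2 : -s ≤ u := by have := neg_abs_le u; linarith
  rw [abs_sub_le_iff]
  constructor
  · have := Real.exp_le_exp.mpr h1; linarith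
  · have hle : Real.exp (-s) ≤ Real.exp u := Real.exp_le_exp.mpr h2
    have key : 1 - Real.exp (-s) ≤ Real.exp s - 1 := by
      rw [Real.exp_neg]
      have h3 := Real.exp_pos s
      have h5 : (Real.exp s)⁻¹ * Real.exp s = 1 := inv_mul_cancel₀ h3.ne'
      nlinarith [sq_nonneg (Real.exp s - 1)]
    linarith

lemma summable_g {β c : ℝ} (hβ₀ : 0 < β) (hc : 0 < c) :
    Summable (fun d : ℕ => (d:ℝ) ^ β * Real.exp (-(c * (d:ℝ) ^ β))) := by
  set N : ℕ := ⌈2 / β⌉₊ + 1 with hN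
  have hNβ : 2 ≤ β * (N - 1 : ℕ) := by
    have h1 : 2 / β ≤ (⌈2 / β⌉₊ : ℝ) := Nat.le_ceil _
    have : (N - 1 : ℕ) = (⌈2 / β⌉₊ : ℕ) := by omega
    rw [this]
    rw [div_le_iff₀ hβ₀] at h1
    linarith [h1]
  have hconst : (0:ℝ) < (N.factorial : ℝ) / c ^ N := by positivity
  apply Summable.of_nonneg_of_le (fun d => by positivity) (fun d => ?_)
    ((Real.summable_one_div_nat_pow.mpr (by norm_num : 1 < 2)).mul_left
      ((N.factorial : ℝ) / c ^ N))
  rcases Nat.eq_zero_or_pos d with rfl | hd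
  · simp [Real.zero_rpow hβ₀.ne']
  -- d ≥ 1
  have hd1 : (1:ℝ) ≤ (d:ℝ) := by exact_mod_cast hd
  set t : ℝ := (d:ℝ) ^ β with ht
  have ht1 : 1 ≤ t := Real.one_le_rpow hd1 hβ₀.le
  have ht0 : 0 < t := lt_of_lt_of_le zero_lt_one ht1
  -- exp (c*t) ≥ (c*t)^N / N!
  have hexp : (c * t) ^ N / (N.factorial : ℝ) ≤ Real.exp (c * t) := by
    have hsum := Real.sum_le_exp_of_nonneg (by positivity : (0:ℝ) ≤ c * t) (N + 1)
    refine le_trans ?_ hsum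
    exact Finset.single_le_sum (f := fun i => (c*t)^i / (i.factorial : ℝ))
      (fun i _ => by positivity) (Finset.self_mem_range_succ N)
  have hexpneg : Real.exp (-(c * t)) ≤ (N.factorial : ℝ) / (c * t) ^ N := by
    rw [Real.exp_neg, ← one_div, div_le_div_iff₀ (Real.exp_pos _) (by positivity)]
    calc 1 * (c * t) ^ N = ((c * t) ^ N / (N.factorial : ℝ)) * (N.factorial : ℝ) := by
          field_simp
      _ ≤ Real.exp (c * t) * (N.factorial : ℝ) :=
          mul_le_mul_of_nonneg_right hexp (by positivity)
      _ = (N.factorial : ℝ) * Real.exp (c * t) := mul_comm _ _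
  have hbound : t * Real.exp (-(c * t)) ≤ ((N.factorial : ℝ) / c ^ N) * (t / t ^ N) := by
    calc t * Real.exp (-(c * t)) ≤ t * ((N.factorial : ℝ) / (c * t) ^ N) :=
          mul_le_mul_of_nonneg_left hexpneg ht0.le
      _ = ((N.factorial : ℝ) / c ^ N) * (t / t ^ N) := by
          rw [mul_pow]; field_simp
  refine hbound.trans ?_
  have hNpos : 1 ≤ N := by omega
  have htpow : (d:ℝ) ^ (2:ℕ) ≤ t ^ (N - 1) := by
    have he : t ^ (N - 1) = (d:ℝ) ^ (β * (N - 1 : ℕ)) := by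
      rw [ht, ← Real.rpow_natCast ((d:ℝ) ^ β) (N - 1), ← Real.rpow_mul (by positivity)]
    rw [he]
    calc (d:ℝ) ^ (2:ℕ) = (d:ℝ) ^ (2:ℝ) := by rw [← Real.rpow_natCast]; norm_num
      _ ≤ (d:ℝ) ^ (β * (N - 1 : ℕ)) := Real.rpow_le_rpow_of_exponent_le hd1 hNβ
  have hfrac : t / t ^ N ≤ 1 / (d:ℝ) ^ (2:ℕ) := by
    have htN : t / t ^ N = 1 / t ^ (N - 1) := by
      have hh : t ^ N = t * t ^ (N - 1) := by
        rw [← pow_succ']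
        congr 1
      rw [hh]
      field_simp
    rw [htN]
    exact one_div_le_one_div_of_le (by positivity) htpow
  calc (N.factorial : ℝ) / c ^ N * (t / t ^ N)
      ≤ (N.factorial : ℝ) / c ^ N * (1 / (d:ℝ) ^ (2:ℕ)) :=
        mul_le_mul_of_nonneg_left hfrac hconst.le

lemma row_sum_le (G : ℕ → ℝ) (hG : ∀ d, 0 ≤ G d) (hGs : Summable G) (m : ℕ) (s : Finset ℕ) :
    ∑ k ∈ s, G (if k ≤ m then m - k else k - m) ≤ 2 * ∑' d, G d := by
  have hK0 : 0 ≤ ∑' d, G d := tsum_nonneg hG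
  rw [← Finset.sum_filter_add_sum_filter_not s (fun k => k ≤ m)]
  have h1 : ∑ k ∈ s.filter (fun k => k ≤ m), G (if k ≤ m then m - k else k - m)
      ≤ ∑' d, G d := by
    have he : ∑ k ∈ s.filter (fun k => k ≤ m), G (if k ≤ m then m - k else k - m)
        = ∑ d ∈ (s.filter (fun k => k ≤ m)).image (fun k => m - k), G d := by
      rw [Finset.sum_image]
      · apply Finset.sum_congr rfl
        intro k hk
        rw [if_pos (Finset.mem_filter.mp hk).2]
      · intro a ha b hb hab
        have ha' := (Finset.mem_filter.mp ha).2
        have hb' := (Finset.mem_filter.mp hb).2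
        simp only at hab
        omega
    rw [he]
    exact Summable.sum_le_tsum _ (fun d _ => hG d) hGs
  have h2 : ∑ k ∈ s.filter (fun k => ¬ k ≤ m), G (if k ≤ m then m - k else k - m)
      ≤ ∑' d, G d := by
    have he : ∑ k ∈ s.filter (fun k => ¬ k ≤ m), G (if k ≤ m then m - k else k - m)
        = ∑ d ∈ (s.filter (fun k => ¬ k ≤ m)).image (fun k => k - m), G d := by
      rw [Finset.sum_image]
      · apply Finset.sum_congr rfl
        intro k hk
        rw [if_neg (Finset.mem_filter.mp hk).2]
      · intro a ha b hb hab
        have ha' := (Finset.mem_filter.mp ha).2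
        have hb' := (Finset.mem_filter.mp hb).2
        simp only at hab
        omega
    rw [he]
    exact Summable.sum_le_tsum _ (fun d _ => hG d) hGs
  linarith

set_option maxHeartbeats 1000000 in
/-- Jaffard's theorem (sub-exponential/exponential case): if a bounded bijective
operator `T` on `ℓ²` has matrix `A_{m,n} = ⟨T δ_n, δ_m⟩` satisfying
`|A_{m,n}| ≤ C e^{-γ|m-n|^β}`, then the matrix of `T⁻¹` satisfies
`|⟨T⁻¹ δ_n, δ_m⟩| ≤ C₁ e^{-γ₁|m-n|^β}` for some `γ₁ ∈ (0,γ)` and `C₁ > 0`. -/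
theorem stmt_13 (β γ : ℝ) (hβ₀ : 0 < β) (hβ₁ : β ≤ 1) (hγ : 0 < γ)
    (T : lp (fun _ : ℕ => ℂ) 2 →L[ℂ] lp (fun _ : ℕ => ℂ) 2)
    (hTbij : Function.Bijective T) (C : ℝ) (hC : 0 < C)
    (hA : ∀ m n : ℕ,
      ‖(inner ℂ (T (lp.single 2 n (1:ℂ))) (lp.single 2 m (1:ℂ)) : ℂ)‖
        ≤ C * Real.exp (-γ * |(m:ℝ) - (n:ℝ)| ^ β)) :
    ∃ γ₁ : ℝ, 0 < γ₁ ∧ γ₁ < γ ∧ ∃ C₁ > (0:ℝ),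
      ∀ m n : ℕ, ∀ x : lp (fun _ : ℕ => ℂ) 2, T x = lp.single 2 n (1:ℂ) →
        ‖(inner ℂ x (lp.single 2 m (1:ℂ)) : ℂ)‖
          ≤ C₁ * Real.exp (-γ₁ * |(m:ℝ) - (n:ℝ)| ^ β) := by
  classical
  -- inner products against basis vectors are coordinates
  have hinner : ∀ (f : H) (j : ℕ),
      ‖(inner ℂ f (lp.single 2 j (1:ℂ)) : ℂ)‖ = ‖(f : ℕ → ℂ) j‖ := by
    intro f j
    rw [lp.inner_single_right]
    simp [RCLike.inner_apply]
  have hA' : ∀ j k : ℕ, ‖(T (lp.single 2 k (1:ℂ)) : ℕ → ℂ) j‖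
      ≤ C * Real.exp (-γ * |(j:ℝ) - (k:ℝ)| ^ β) := by
    intro j k
    rw [← hinner (T (lp.single 2 k (1:ℂ))) j]
    exact hA j k
  -- the inverse
  have hker : T.ker = ⊥ := LinearMap.ker_eq_bot.mpr hTbij.1
  have hrange : T.range = ⊤ := LinearMap.range_eq_top.mpr hTbij.2
  set Te : H ≃L[ℂ] H := ContinuousLinearEquiv.ofBijective T hker hrange with hTe
  set M : ℝ := ‖(Te.symm : H →L[ℂ] H)‖ + 1 with hMdef
  have hM : 0 < M := by positivity
  have hTesymm : ∀ u : H, ‖Te.symm u‖ ≤ M * ‖u‖ := by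
    intro u
    calc ‖Te.symm u‖ ≤ ‖(Te.symm : H →L[ℂ] H)‖ * ‖u‖ :=
          (Te.symm : H →L[ℂ] H).le_opNorm u
      _ ≤ M * ‖u‖ := by
          apply mul_le_mul_of_nonneg_right _ (norm_nonneg u)
          rw [hMdef]; linarith
  -- the comparison series
  set g : ℕ → ℝ := fun d => (d:ℝ) ^ β * Real.exp (-((γ/2) * (d:ℝ) ^ β)) with hgdef
  have hgnn : ∀ d, 0 ≤ g d := fun d => by
    apply mul_nonneg (Real.rpow_nonneg (Nat.cast_nonneg d) β) (Real.exp_pos _).le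
  have hgs : Summable g := summable_g hβ₀ (half_pos hγ)
  set K : ℝ := ∑' d, g d with hKdef
  have hK0 : 0 ≤ K := tsum_nonneg hgnn
  -- the small parameter
  set θ : ℝ := min (γ/2) (1/(4*C*(K+1)*M)) with hθdef
  have hθpos : 0 < θ := lt_min (half_pos hγ) (by positivity)
  have hθγ2 : θ ≤ γ/2 := min_le_left _ _
  have hθ2 : θ ≤ 1/(4*C*(K+1)*M) := min_le_right _ _
  set S : ℝ := 2*C*θ*(K+1) with hSdef
  have hS0 : 0 ≤ S := by positivity
  have hSM : S * M ≤ 1/2 := by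
    have hX : 0 < 4*C*(K+1)*M := by positivity
    have h1 : θ * (4*C*(K+1)*M) ≤ 1 := by
      rw [← le_div_iff₀ hX]
      exact hθ2
    nlinarith
  refine ⟨θ, hθpos, by linarith, 2*M, by positivity, ?_⟩
  intro m n x hx
  -- weights
  set dn : ℕ → ℝ := fun k => |(k:ℝ) - (n:ℝ)| with hdndef
  set R : ℝ := dn m with hRdef
  have hR0 : 0 ≤ R := abs_nonneg _
  set v : ℕ → ℝ := fun k => θ * (min (dn k) R) ^ β with hvdef
  have hminnn : ∀ k, 0 ≤ min (dn k) R := fun k => le_min (abs_nonneg _) hR0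
  have hv0 : ∀ k, 0 ≤ v k := fun k =>
    mul_nonneg hθpos.le (Real.rpow_nonneg (hminnn k) β)
  have hvR : ∀ k, v k ≤ θ * R ^ β := fun k =>
    mul_le_mul_of_nonneg_left
      (Real.rpow_le_rpow (hminnn k) (min_le_right _ _) hβ₀.le) hθpos.le
  have hvn : v n = 0 := by
    have : dn n = 0 := by simp [hdndef]
    simp [hvdef, this, min_eq_left hR0, Real.zero_rpow hβ₀.ne']
  have hvm : v m = θ * (dn m) ^ β := by
    simp [hvdef, ← hRdef, min_self]
  have hlip : ∀ j k : ℕ, |v j - v k| ≤ θ * |(j:ℝ) - (k:ℝ)| ^ β := by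
    intro j k
    have h1 : |v j - v k| = θ * |(min (dn j) R) ^ β - (min (dn k) R) ^ β| := by
      rw [hvdef, ← mul_sub, abs_mul, abs_of_nonneg hθpos.le]
    rw [h1]
    apply mul_le_mul_of_nonneg_left _ hθpos.le
    calc |(min (dn j) R) ^ β - (min (dn k) R) ^ β|
        ≤ |min (dn j) R - min (dn k) R| ^ β :=
          abs_rpow_sub hβ₀ hβ₁ (hminnn j) (hminnn k)
      _ ≤ |dn j - dn k| ^ β :=
          Real.rpow_le_rpow (abs_nonneg _) (abs_min_sub_min _ _ _) hβ₀.le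
      _ ≤ |(j:ℝ) - (k:ℝ)| ^ β := by
          apply Real.rpow_le_rpow (abs_nonneg _) _ hβ₀.le
          have := abs_abs_sub_abs_le_abs_sub ((j:ℝ) - (n:ℝ)) ((k:ℝ) - (n:ℝ))
          have he : (j:ℝ) - (n:ℝ) - ((k:ℝ) - (n:ℝ)) = (j:ℝ) - (k:ℝ) := by ring
          rw [he] at this
          exact this
  set w : ℕ → ℂ := fun k => (Real.exp (v k) : ℂ) with hwdef
  set wi : ℕ → ℂ := fun k => (Real.exp (-(v k)) : ℂ) with hwidef
  set BW : ℝ := Real.exp (θ * R ^ β) with hBWdef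
  have hBW0 : 0 ≤ BW := (Real.exp_pos _).le
  have hwB : ∀ k, ‖w k‖ ≤ BW := by
    intro k
    rw [hwdef]
    simp only [Complex.norm_real, Real.norm_eq_abs, Real.abs_exp]
    exact Real.exp_le_exp.mpr (hvR k)
  have hwi1 : ∀ k, ‖wi k‖ ≤ 1 := by
    intro k
    rw [hwidef]
    simp only [Complex.norm_real, Real.norm_eq_abs, Real.abs_exp]
    exact Real.exp_le_one_iff.mpr (by linarith [hv0 k])
  set Dw : H →L[ℂ] H := diagCLM w BW hBW0 hwB with hDwdef
  set Dwi : H →L[ℂ] H := diagCLM wi 1 zero_le_one hwi1 with hDwidef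
  set Eop : H →L[ℂ] H := (Dw.comp T).comp Dwi - T with hEopdef
  -- entry bounds
  set nd : ℕ → ℕ → ℕ := fun j k => if k ≤ j then j - k else k - j with hnddef
  have hndcast : ∀ j k, ((nd j k : ℕ) : ℝ) = |(j:ℝ) - (k:ℝ)| := by
    intro j k
    by_cases h2 : k ≤ j
    · simp only [hnddef, if_pos h2]
      rw [abs_of_nonneg (sub_nonneg.mpr (Nat.cast_le.mpr h2))]
      push_cast [h2]
      ring
    · simp only [hnddef, if_neg h2]
      have h : j ≤ k := le_of_not_ge h2
      rw [abs_of_nonpos (sub_nonpos.mpr (Nat.cast_le.mpr h))]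
      push_cast [h]
      ring
  set b : ℕ → ℕ → ℝ := fun j k => C * θ * g (nd j k) with hbdef
  have hbnn : ∀ j k, 0 ≤ b j k := fun j k =>
    mul_nonneg (by positivity) (hgnn _)
  have hDwi_single : ∀ k, Dwi (lp.single 2 k (1:ℂ)) = wi k • lp.single 2 k (1:ℂ) := by
    intro k
    apply lp.ext
    funext i
    rw [hDwidef, diagCLM_apply, lp.coeFn_smul, Pi.smul_apply, smul_eq_mul]
    rcases eq_or_ne i k with rfl | hik
    · rw [lp.single_apply_self]
    · rw [lp.single_apply_ne 2 k _ hik, mul_zero, mul_zero]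
  have hwiw : ∀ i, wi i * w i = 1 := by
    intro i
    rw [hwidef, hwdef, ← Complex.ofReal_mul, ← Real.exp_add, neg_add_cancel,
      Real.exp_zero, Complex.ofReal_one]
  have hent : ∀ j k, ‖(Eop (lp.single 2 k (1:ℂ)) : ℕ → ℂ) j‖ ≤ b j k := by
    intro j k
    set t : ℝ := |(j:ℝ) - (k:ℝ)| ^ β with htdef
    have ht0 : 0 ≤ t := Real.rpow_nonneg (abs_nonneg _) β
    have hcoord : (Eop (lp.single 2 k (1:ℂ)) : ℕ → ℂ) j
        = ((Real.exp (v j - v k) : ℝ) - 1 : ℂ) * (T (lp.single 2 k (1:ℂ)) : ℕ → ℂ) j := by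
      have h1 : Eop (lp.single 2 k (1:ℂ))
          = wi k • Dw (T (lp.single 2 k (1:ℂ))) - T (lp.single 2 k (1:ℂ)) := by
        rw [hEopdef]
        simp only [ContinuousLinearMap.sub_apply, ContinuousLinearMap.comp_apply]
        rw [hDwi_single k, map_smul, map_smul]
      rw [h1]
      have hw2 : wi k * w j = ((Real.exp (v j - v k) : ℝ) : ℂ) := by
        rw [hwidef, hwdef, ← Complex.ofReal_mul, ← Real.exp_add]
        congr 1
        ring
      rw [lp.coeFn_sub, Pi.sub_apply, lp.coeFn_smul, Pi.smul_apply, smul_eq_mul,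
        hDwdef, diagCLM_apply, ← mul_assoc, hw2]
      ring
    rw [hcoord, norm_mul]
    have h2 : ‖((Real.exp (v j - v k) : ℝ) - 1 : ℂ)‖ ≤ Real.exp (θ * t) - 1 := by
      rw [show ((Real.exp (v j - v k) : ℝ) - 1 : ℂ)
          = ((Real.exp (v j - v k) - 1 : ℝ) : ℂ) by push_cast; ring]
      rw [Complex.norm_real, Real.norm_eq_abs]
      exact abs_exp_sub_one_le (hlip j k)
    have h2' : 0 ≤ Real.exp (θ * t) - 1 := by
      have := Real.one_le_exp (by positivity : (0:ℝ) ≤ θ * t)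
      linarith
    calc ‖((Real.exp (v j - v k) : ℝ) - 1 : ℂ)‖ * ‖(T (lp.single 2 k (1:ℂ)) : ℕ → ℂ) j‖
        ≤ (Real.exp (θ * t) - 1) * (C * Real.exp (-γ * t)) :=
          mul_le_mul h2 (hA' j k) (norm_nonneg _) h2'
      _ ≤ (θ * t * Real.exp (θ * t)) * (C * Real.exp (-γ * t)) :=
          mul_le_mul_of_nonneg_right (exp_sub_one_le (by positivity)) (by positivity)
      _ = C * θ * (t * Real.exp (θ * t + -γ * t)) := by
          rw [Real.exp_add]; ring
      _ ≤ C * θ * (t * Real.exp (-(γ/2 * t))) := by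
          apply mul_le_mul_of_nonneg_left _ (by positivity)
          apply mul_le_mul_of_nonneg_left _ ht0
          apply Real.exp_le_exp.mpr
          nlinarith
      _ = b j k := by
          rw [hbdef]
          simp only [hgdef]
          rw [hndcast j k]
  have hrowS : ∀ j, ∀ s : Finset ℕ, ∑ k ∈ s, b j k ≤ S := by
    intro j s
    have h1 : ∑ k ∈ s, b j k = C * θ * ∑ k ∈ s, g (nd j k) := by
      rw [Finset.mul_sum]
    rw [h1]
    have h2 : ∑ k ∈ s, g (nd j k) ≤ 2 * K := by
      have := row_sum_le g hgnn hgs j s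
      simpa [hnddef] using this
    calc C * θ * ∑ k ∈ s, g (nd j k) ≤ C * θ * (2 * K) :=
          mul_le_mul_of_nonneg_left h2 (by positivity)
      _ ≤ S := by rw [hSdef]; nlinarith
  have hndsymm : ∀ j k, nd j k = nd k j := by
    intro j k
    simp only [hnddef]
    split_ifs <;> omega
  have hcolS : ∀ k, ∀ s : Finset ℕ, ∑ j ∈ s, b j k ≤ S := by
    intro k s
    have h0 : ∑ j ∈ s, b j k = ∑ j ∈ s, C * θ * g (nd k j) := by
      apply Finset.sum_congr rfl
      intro j _
      rw [hbdef]
      simp only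
      rw [hndsymm j k]
    rw [h0, ← Finset.mul_sum]
    have h2 : ∑ j ∈ s, g (nd k j) ≤ 2 * K := by
      have := row_sum_le g hgnn hgs k s
      simpa [hnddef] using this
    calc C * θ * ∑ j ∈ s, g (nd k j) ≤ C * θ * (2 * K) :=
          mul_le_mul_of_nonneg_left h2 (by positivity)
      _ ≤ S := by rw [hSdef]; nlinarith
  have hE : ∀ z : H, ‖Eop z‖ ≤ S * ‖z‖ := schur Eop b S hS0 hbnn hent hrowS hcolS
  -- the weighted vector
  have hδ : ‖(lp.single 2 n (1:ℂ) : H)‖ = 1 :=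
    (lp.norm_single (E := fun _ : ℕ => ℂ) (p := 2) (by norm_num) n (1:ℂ)).trans norm_one
  have hDwiDw : Dwi (Dw x) = x := by
    apply lp.ext
    funext i
    rw [hDwidef, diagCLM_apply, hDwdef, diagCLM_apply, ← mul_assoc, hwiw, one_mul]
  have hDwδ : Dw (lp.single 2 n (1:ℂ)) = lp.single 2 n (1:ℂ) := by
    apply lp.ext
    funext i
    rw [hDwdef, diagCLM_apply]
    rcases eq_or_ne i n with rfl | hin
    · rw [lp.single_apply_self]
      have : w i = 1 := by rw [hwdef]; simp [hvn]
      rw [this, one_mul]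
    · rw [lp.single_apply_ne 2 n _ hin, mul_zero]
  have hTy : T (Dw x) = lp.single 2 n (1:ℂ) - Eop (Dw x) := by
    have h1 : Eop (Dw x) = Dw (T x) - T (Dw x) := by
      rw [hEopdef]
      simp only [ContinuousLinearMap.sub_apply, ContinuousLinearMap.comp_apply]
      rw [hDwiDw]
    rw [hx, hDwδ] at h1
    rw [h1]
    abel
  have hy : ‖Dw x‖ ≤ 2 * M := by
    have h3 : Te.symm (T (Dw x)) = Dw x :=
      ContinuousLinearEquiv.ofBijective_symm_apply_apply T hker hrange (Dw x)
    have h4 : ‖Dw x‖ ≤ M * (1 + S * ‖Dw x‖) := by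
      calc ‖Dw x‖ = ‖Te.symm (T (Dw x))‖ := by rw [h3]
        _ ≤ M * ‖T (Dw x)‖ := hTesymm _
        _ ≤ M * (1 + S * ‖Dw x‖) := by
            apply mul_le_mul_of_nonneg_left _ hM.le
            rw [hTy]
            exact le_trans (norm_sub_le _ _) (add_le_add (le_of_eq hδ) (hE _))
    have h5 : S * M * ‖Dw x‖ ≤ (1/2) * ‖Dw x‖ :=
      mul_le_mul_of_nonneg_right hSM (norm_nonneg _)
    have h6 : M * (1 + S * ‖Dw x‖) = M + S * M * ‖Dw x‖ := by ring
    rw [h6] at h4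
    have h7 : ‖Dw x‖ ≤ M + 1/2 * ‖Dw x‖ := h4.trans (add_le_add_right h5 M)
    linarith
  -- conclude
  rw [hinner x m]
  have hxm : (x : ℕ → ℂ) m = wi m * (Dw x : ℕ → ℂ) m := by
    rw [hDwdef, diagCLM_apply, ← mul_assoc, hwiw, one_mul]
  rw [hxm, norm_mul]
  have hwim : ‖wi m‖ = Real.exp (-(v m)) := by
    rw [hwidef, Complex.norm_real, Real.norm_eq_abs, Real.abs_exp]
  calc ‖wi m‖ * ‖(Dw x : ℕ → ℂ) m‖ ≤ Real.exp (-(v m)) * (2 * M) := by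
        rw [hwim]
        apply mul_le_mul_of_nonneg_left _ (Real.exp_pos _).le
        exact (lp.norm_apply_le_norm (by norm_num) (Dw x) m).trans hy
    _ = 2 * M * Real.exp (-θ * |(m:ℝ) - (n:ℝ)| ^ β) := by
        rw [hvm]
        have : dn m = |(m:ℝ) - (n:ℝ)| := rfl
        rw [this, show -(θ * |(m:ℝ) - (n:ℝ)| ^ β) = -θ * |(m:ℝ) - (n:ℝ)| ^ β by ring]
        ring
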